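/- With the setup of FreeMerge, the output Z = (w₁ᶻ, z₁, …, w_{m+n}ᶻ, z_{m+n}) satisfies the weight-partition property: for each 1 ≤ i ≤ m, if z_a = x_i and z_b = x_{i+1}, then w_{i+1}ˣ = Σ_{j=a+1}^{b} w_jᶻ; moreover w₁ˣ = Σ_{j=1}^{k} w_jᶻ where z_k = x₁; and the analogous statements hold for Y. -/

import Mathlib

noncomputable def freeMerge {α : Type*} : List (ℝ × α) → List (ℝ × α) → List (ℝ × α)
  | [], Y => Y
  | X, [] => X
  | (wx, x) :: X, (wy, y) :: Y =>
      if wx < wy then (wx, x) :: freeMerge X ((wy - wx, y) :: Y)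
      else (wy, y) :: freeMerge ((wx - wy, x) :: X) Y
termination_by X Y => X.length + Y.length
decreasing_by all_goals simp

theorem freeMerge_nil_right {α : Type*} (X : List (ℝ × α)) : freeMerge X [] = X := by
  cases X <;> simp [freeMerge]

theorem freeMerge_perm {α : Type*} (X Y : List (ℝ × α)) :
    ((freeMerge X Y).map Prod.snd).Perm (X.map Prod.snd ++ Y.map Prod.snd) := by
  induction X, Y using freeMerge.induct with
  | case1 Y => simp [freeMerge]
  | case2 X h => rw [freeMerge_nil_right]; simp
  | case3 wx x X wy y Y hlt ih =>
      rw [freeMerge, if_pos hlt]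
      simpa using ih.cons x
  | case4 wx x X wy y Y hlt ih =>
      rw [freeMerge, if_neg hlt]
      simp only [List.map_cons] at ih ⊢
      refine (ih.cons y).trans ?_
      exact (List.perm_middle).symm

theorem freeMerge_sublist_left {α : Type*} (X Y : List (ℝ × α)) :
    List.Sublist (X.map Prod.snd) ((freeMerge X Y).map Prod.snd) := by
  induction X, Y using freeMerge.induct with
  | case1 Y => simp [freeMerge]
  | case2 X h => rw [freeMerge_nil_right]
  | case3 wx x X wy y Y hlt ih =>
      rw [freeMerge, if_pos hlt]; simpa using ih.cons₂ x
  | case4 wx x X wy y Y hlt ih =>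
      rw [freeMerge, if_neg hlt]
      simp only [List.map_cons] at ih ⊢
      exact ih.cons y

theorem freeMerge_sublist_right {α : Type*} (X Y : List (ℝ × α)) :
    List.Sublist (Y.map Prod.snd) ((freeMerge X Y).map Prod.snd) := by
  induction X, Y using freeMerge.induct with
  | case1 Y => simp [freeMerge]
  | case2 X h => rw [freeMerge_nil_right]; simp
  | case3 wx x X wy y Y hlt ih =>
      rw [freeMerge, if_pos hlt]
      simp only [List.map_cons] at ih ⊢
      exact ih.cons x
  | case4 wx x X wy y Y hlt ih =>
      rw [freeMerge, if_neg hlt]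
      simp only [List.map_cons] at ih ⊢
      exact ih.cons₂ y

theorem freeMerge_nil_left {α : Type*} (Y : List (ℝ × α)) : freeMerge [] Y = Y := by
  rw [freeMerge]

theorem freeMerge_key {α : Type*} (X Y : List (ℝ × α)) :
    (X.map Prod.snd).Nodup → (Y.map Prod.snd).Nodup →
    (∀ a, a ∈ X.map Prod.snd → a ∉ Y.map Prod.snd) →
    (∀ b i (hb : b < (freeMerge X Y).length) (hi : i < X.length),
      (freeMerge X Y)[b].2 = X[i].2 →
      (((freeMerge X Y).map Prod.fst).take (b+1)).sum = ((X.map Prod.fst).take (i+1)).sum)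
    ∧ (∀ b j (hb : b < (freeMerge X Y).length) (hj : j < Y.length),
      (freeMerge X Y)[b].2 = Y[j].2 →
      (((freeMerge X Y).map Prod.fst).take (b+1)).sum = ((Y.map Prod.fst).take (j+1)).sum) := by
  induction X, Y using freeMerge.induct with
  | case1 Y =>
      intro _ hnY _
      rw [freeMerge_nil_left]
      constructor
      · intro b i hb hi; simp at hi
      · intro b j hb hj heq
        have h2 : (Y.map Prod.snd)[b]'(by simpa using hb) = (Y.map Prod.snd)[j]'(by simpa using hj) := by
          simpa using heq
        have hbj : b = j := hnY.getElem_inj_iff.mp h2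
        subst hbj; rfl
  | case2 X h =>
      intro hnX _ _
      rw [freeMerge_nil_right]
      constructor
      · intro b i hb hi heq
        have h2 : (X.map Prod.snd)[b]'(by simpa using hb) = (X.map Prod.snd)[i]'(by simpa using hi) := by
          simpa using heq
        have hbi : b = i := hnX.getElem_inj_iff.mp h2
        subst hbi; rfl
      · intro b j hb hj; simp at hj
  | case3 wx x X wy y Y hlt ih =>
      intro hnX hnY hdisj
      simp only [List.map_cons, List.nodup_cons] at hnX hnY
      have hdisj' : ∀ a, a ∈ X.map Prod.snd → a ∉ (((wy - wx, y) :: Y).map Prod.snd) := by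
        intro a ha
        simpa using hdisj a (by simp [ha])
      obtain ⟨ih1, ih2⟩ := ih hnX.2 (by simpa using List.nodup_cons.mpr hnY) hdisj'
      have hZ : freeMerge ((wx, x) :: X) ((wy, y) :: Y)
          = (wx, x) :: freeMerge X ((wy - wx, y) :: Y) := by
        rw [freeMerge, if_pos hlt]
      rw [hZ]
      set Z' := freeMerge X ((wy - wx, y) :: Y) with hZ'
      constructor
      · intro b i hb hi heq
        match b, i with
        | 0, 0 => simp
        | 0, i + 1 =>
            exfalso
            have h2 : x = (X.map Prod.snd)[i]'(by simpa using hi) := by simpa using heq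
            exact hnX.1 (h2 ▸ List.getElem_mem _)
        | b + 1, 0 =>
            exfalso
            have hxm : x ∈ Z'.map Prod.snd := by
              have h2 : (Z'.map Prod.snd)[b]'(by simpa using hb) = x := by simpa using heq
              exact h2 ▸ List.getElem_mem _
            have hm := (freeMerge_perm X ((wy - wx, y) :: Y)).mem_iff.mp hxm
            simp only [List.mem_append, List.map_cons, List.mem_cons] at hm
            rcases hm with h | h | h
            · exact hnX.1 h
            · exact hdisj x (by simp) (by simp [h])
            · exact hdisj x (by simp) (by simp [h])
        | b + 1, i + 1 =>
            have key := ih1 b i (by simpa using hb) (by simpa using hi) (by simpa using heq)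
            simp only [List.map_cons, List.take_succ_cons, List.sum_cons, key]
      · intro b j hb hj heq
        match b with
        | 0 =>
            exfalso
            have h2 : x = (((wy, y) :: Y)[j]'(by simpa using hj)).2 := heq
            refine hdisj x (by simp) ?_
            rw [h2]
            exact List.mem_map_of_mem (f := Prod.snd) (List.getElem_mem _)
        | b + 1 =>
            have hsnd : (((wy, y) :: Y)[j]'(by simpa using hj)).2
                = (((wy - wx, y) :: Y)[j]'(by simpa using hj)).2 := by
              match j with
              | 0 => rfl
              | j + 1 => simp
            have h2 : (Z'[b]'(by simpa using hb)).2
                = (((wy, y) :: Y)[j]'(by simpa using hj)).2 := by simpa using heq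
            have key := ih2 b j (by simpa using hb) (by simpa using hj) (h2.trans hsnd)
            simp only [List.map_cons, List.take_succ_cons, List.sum_cons] at key ⊢
            linarith [key]
  | case4 wx x X wy y Y hlt ih =>
      intro hnX hnY hdisj
      simp only [List.map_cons, List.nodup_cons] at hnX hnY
      have hdisj' : ∀ a, a ∈ (((wx - wy, x) :: X).map Prod.snd) → a ∉ Y.map Prod.snd := by
        intro a ha
        have h3 := hdisj a (by simpa using ha)
        simp only [List.map_cons, List.mem_cons] at h3
        exact fun h => h3 (Or.inr h)
      obtain ⟨ih1, ih2⟩ := ih (by simpa using List.nodup_cons.mpr hnX) hnY.2 hdisj'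
      have hZ : freeMerge ((wx, x) :: X) ((wy, y) :: Y)
          = (wy, y) :: freeMerge ((wx - wy, x) :: X) Y := by
        rw [freeMerge, if_neg hlt]
      rw [hZ]
      set Z' := freeMerge ((wx - wy, x) :: X) Y with hZ'
      constructor
      · intro b i hb hi heq
        match b with
        | 0 =>
            exfalso
            have h2 : y = (((wx, x) :: X)[i]'(by simpa using hi)).2 := heq
            refine hdisj y ?_ (by simp)
            rw [h2]
            exact List.mem_map_of_mem (f := Prod.snd) (List.getElem_mem _)
        | b + 1 =>
            have hsnd : (((wx, x) :: X)[i]'(by simpa using hi)).2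
                = (((wx - wy, x) :: X)[i]'(by simpa using hi)).2 := by
              match i with
              | 0 => rfl
              | i + 1 => simp
            have h2 : (Z'[b]'(by simpa using hb)).2
                = (((wx, x) :: X)[i]'(by simpa using hi)).2 := by simpa using heq
            have key := ih1 b i (by simpa using hb) (by simpa using hi) (h2.trans hsnd)
            simp only [List.map_cons, List.take_succ_cons, List.sum_cons] at key ⊢
            linarith [key]
      · intro b j hb hj heq
        match b, j with
        | 0, 0 => simp
        | 0, j + 1 =>
            exfalso
            have h2 : y = (Y.map Prod.snd)[j]'(by simpa using hj) := by simpa using heq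
            exact hnY.1 (h2 ▸ List.getElem_mem _)
        | b + 1, 0 =>
            exfalso
            have hym : y ∈ Z'.map Prod.snd := by
              have h2 : (Z'.map Prod.snd)[b]'(by simpa using hb) = y := by simpa using heq
              exact h2 ▸ List.getElem_mem _
            have hm := (freeMerge_perm ((wx - wy, x) :: X) Y).mem_iff.mp hym
            simp only [List.mem_append, List.map_cons, List.mem_cons] at hm
            rcases hm with (h | h) | h
            · exact hdisj y (by simp [h]) (by simp)
            · exact hdisj y (by simp [h]) (by simp)
            · exact hnY.1 h
        | b + 1, j + 1 =>
            have key := ih2 b j (by simpa using hb) (by simpa using hj) (by simpa using heq)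
            simp only [List.map_cons, List.take_succ_cons, List.sum_cons, key]

theorem sublist_index_lt {β : Type*} {l L : List β} (h : List.Sublist l L) (hL : L.Nodup)
    {i a b : ℕ} (hi1 : i < l.length) (hi2 : i + 1 < l.length) (ha : a < L.length)
    (hb : b < L.length) (h1 : L[a] = l[i]) (h2 : L[b] = l[i + 1]) : a < b := by
  obtain ⟨f, hf⟩ := List.sublist_iff_exists_fin_orderEmbedding_get_eq.mp h
  have e1 : a = (f ⟨i, hi1⟩ : Fin L.length).1 := by
    apply hL.getElem_inj_iff.mp
    rw [h1]
    simpa [List.get_eq_getElem] using hf ⟨i, hi1⟩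
  have e2 : b = (f ⟨i + 1, hi2⟩ : Fin L.length).1 := by
    apply hL.getElem_inj_iff.mp
    rw [h2]
    simpa [List.get_eq_getElem] using hf ⟨i + 1, hi2⟩
  rw [e1, e2]
  exact f.strictMono (by simp [Fin.lt_def])

/-- weight-partition property of `freeMerge`.  For each `i`, if
`z_a = x_i` and `z_b = x_{i+1}` then `w_{i+1}^X = Σ_{j=a+1}^{b} w_j^Z`; moreover
`w_1^X = Σ_{j=1}^{k} w_j^Z` where `z_k = x_1`; and the analogous statements hold for `Y`. -/
theorem freeMerge_weights {α : Type*} (X Y : List (ℝ × α))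
    (hwX : ∀ p ∈ X, 0 ≤ p.1) (hwY : ∀ p ∈ Y, 0 ≤ p.1)
    (hnX : (X.map Prod.snd).Nodup) (hnY : (Y.map Prod.snd).Nodup)
    (hdisj : ∀ a, a ∈ X.map Prod.snd → a ∉ Y.map Prod.snd) :
    (∀ (k : ℕ) (hk : k < ((freeMerge X Y).map Prod.snd).length)
        (h0 : 0 < (X.map Prod.snd).length),
      ((freeMerge X Y).map Prod.snd)[k] = (X.map Prod.snd)[0] →
      (X.map Prod.fst)[0]'(by simpa using h0) =
        (((freeMerge X Y).map Prod.fst).take (k + 1)).sum) ∧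
    (∀ (i a b : ℕ) (hi : i + 1 < (X.map Prod.snd).length)
        (ha : a < ((freeMerge X Y).map Prod.snd).length)
        (hb : b < ((freeMerge X Y).map Prod.snd).length),
      ((freeMerge X Y).map Prod.snd)[a] = (X.map Prod.snd)[i]'(Nat.lt_of_succ_lt hi) →
      ((freeMerge X Y).map Prod.snd)[b] = (X.map Prod.snd)[i + 1] →
      (X.map Prod.fst)[i + 1]'(by simpa using hi) =
        ((((freeMerge X Y).map Prod.fst).drop (a + 1)).take (b - a)).sum) ∧
    (∀ (k : ℕ) (hk : k < ((freeMerge X Y).map Prod.snd).length)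
        (h0 : 0 < (Y.map Prod.snd).length),
      ((freeMerge X Y).map Prod.snd)[k] = (Y.map Prod.snd)[0] →
      (Y.map Prod.fst)[0]'(by simpa using h0) =
        (((freeMerge X Y).map Prod.fst).take (k + 1)).sum) ∧
    (∀ (i a b : ℕ) (hi : i + 1 < (Y.map Prod.snd).length)
        (ha : a < ((freeMerge X Y).map Prod.snd).length)
        (hb : b < ((freeMerge X Y).map Prod.snd).length),
      ((freeMerge X Y).map Prod.snd)[a] = (Y.map Prod.snd)[i]'(Nat.lt_of_succ_lt hi) →
      ((freeMerge X Y).map Prod.snd)[b] = (Y.map Prod.snd)[i + 1] →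
      (Y.map Prod.fst)[i + 1]'(by simpa using hi) =
        ((((freeMerge X Y).map Prod.fst).drop (a + 1)).take (b - a)).sum) := by
  obtain ⟨k1, k2⟩ := freeMerge_key X Y hnX hnY hdisj
  have nodupZ : ((freeMerge X Y).map Prod.snd).Nodup :=
    (freeMerge_perm X Y).nodup_iff.mpr (hnX.append hnY hdisj)
  refine ⟨?_, ?_, ?_, ?_⟩
  · intro k hk h0 heq
    have e := k1 k 0 (by simpa using hk) (by simpa using h0) (by simpa using heq)
    rw [e, List.sum_take_succ _ 0 (by simpa using h0)]
    simp
  · intro i a b hi ha hb h1 h2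
    have hab : a < b := sublist_index_lt (freeMerge_sublist_left X Y) nodupZ
      (Nat.lt_of_succ_lt hi) hi ha hb h1 h2
    have e1 := k1 a i (by simpa using ha) (by simpa using Nat.lt_of_succ_lt hi)
      (by simpa using h1)
    have e2 := k1 b (i + 1) (by simpa using hb) (by simpa using hi) (by simpa using h2)
    have hsplit : (((freeMerge X Y).map Prod.fst).take (b + 1)).sum
        = (((freeMerge X Y).map Prod.fst).take (a + 1)).sum
          + ((((freeMerge X Y).map Prod.fst).drop (a + 1)).take (b - a)).sum := by
      rw [show b + 1 = (a + 1) + (b - a) by omega, List.take_add, List.sum_append]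
    have hX := List.sum_take_succ (X.map Prod.fst) (i + 1) (by simpa using hi)
    rw [hX] at e2
    linarith [e1, e2, hsplit]
  · intro k hk h0 heq
    have e := k2 k 0 (by simpa using hk) (by simpa using h0) (by simpa using heq)
    rw [e, List.sum_take_succ _ 0 (by simpa using h0)]
    simp
  · intro i a b hi ha hb h1 h2
    have hab : a < b := sublist_index_lt (freeMerge_sublist_right X Y) nodupZ
      (Nat.lt_of_succ_lt hi) hi ha hb h1 h2
    have e1 := k2 a i (by simpa using ha) (by simpa using Nat.lt_of_succ_lt hi)
      (by simpa using h1)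
    have e2 := k2 b (i + 1) (by simpa using hb) (by simpa using hi) (by simpa using h2)
    have hsplit : (((freeMerge X Y).map Prod.fst).take (b + 1)).sum
        = (((freeMerge X Y).map Prod.fst).take (a + 1)).sum
          + ((((freeMerge X Y).map Prod.fst).drop (a + 1)).take (b - a)).sum := by
      rw [show b + 1 = (a + 1) + (b - a) by omega, List.take_add, List.sum_append]
    have hY := List.sum_take_succ (Y.map Prod.fst) (i + 1) (by simpa using hi)
    rw [hY] at e2
    linarith [e1, e2, hsplit]
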